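/- Let 0 < ε ≤ 1/2, let X ∈ ℝ^{n×d}, Y ∈ ℝⁿ, and let Π ∈ ℝ^{k×n} be an (ε/3)-subspace embedding for the column space of the augmented matrix [X,Y]. Let m ∈ ℝᵈ and let S ∈ ℝ^{d×d} be invertible. Define Z = [Xᵀ, Sᵀ]ᵀ, z = [Yᵀ, (Sm)ᵀ]ᵀ, Z' = [(ΠX)ᵀ, Sᵀ]ᵀ, z' = [(ΠY)ᵀ, (Sm)ᵀ]ᵀ. Let μ be a minimizer of β ↦ ‖Zβ − z‖² and μ' a minimizer of β ↦ ‖Z'β − z'‖². Suppose ‖Zμ‖ ≥ ρ‖z‖ for some ρ ∈ (0,1]. Then (‖μ'‖² + trace((Z'ᵀZ')⁻¹))^{1/2} ≤ (1 + (κ(Z)/ρ)·ε) · (‖μ‖² + trace((ZᵀZ)⁻¹))^{1/2}, where κ(Z) = σ_max(Z)/σ_min(Z). Equivalently, the ℓ₂ Wasserstein weight of the Gaussian posterior N(μ', (Z'ᵀZ')⁻¹) is at most (1 + (κ(Z)/ρ)·ε) times that of N(μ, (ZᵀZ)⁻¹). -/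

import Mathlib

open Matrix

noncomputable section

/-- Squared Euclidean norm of a vector. -/
def sqNorm {ι : Type*} [Fintype ι] (v : ι → ℝ) : ℝ := ∑ i, (v i) ^ 2

/-- Euclidean norm of a vector. -/
def eNorm {ι : Type*} [Fintype ι] (v : ι → ℝ) : ℝ := Real.sqrt (sqNorm v)

/-- `P` is an `ε`-subspace embedding for the column space of `A`:
for all `x`, `(1-ε)‖Ax‖² ≤ ‖PAx‖² ≤ (1+ε)‖Ax‖²`. -/
def IsSubspaceEmbedding {K N C : Type*} [Fintype K] [Fintype N] [Fintype C]
    (P : Matrix K N ℝ) (A : Matrix N C ℝ) (ε : ℝ) : Prop :=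
  ∀ x : C → ℝ,
    (1 - ε) * sqNorm (A.mulVec x) ≤ sqNorm ((P * A).mulVec x) ∧
      sqNorm ((P * A).mulVec x) ≤ (1 + ε) * sqNorm (A.mulVec x)

/-- The augmented matrix `[X, Y]` obtained by appending the column `Y` to `X`. -/
def augment {n d : ℕ} (X : Matrix (Fin n) (Fin d) ℝ) (Y : Fin n → ℝ) :
    Matrix (Fin n) (Fin (d + 1)) ℝ :=
  Matrix.of fun i => Fin.snoc (X i) (Y i)

/-- The squared smallest singular value of `M`: `σ_min(M)² = inf_{‖x‖ = 1} ‖Mx‖²`. -/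
def sigMinSq {N C : Type*} [Fintype N] [Fintype C] (M : Matrix N C ℝ) : ℝ :=
  sInf {r : ℝ | ∃ x : C → ℝ, sqNorm x = 1 ∧ r = sqNorm (M.mulVec x)}

/-- The squared largest singular value of `M`: `σ_max(M)² = sup_{‖x‖ = 1} ‖Mx‖²`. -/
def sigMaxSq {N C : Type*} [Fintype N] [Fintype C] (M : Matrix N C ℝ) : ℝ :=
  sSup {r : ℝ | ∃ x : C → ℝ, sqNorm x = 1 ∧ r = sqNorm (M.mulVec x)}

/-- The condition number `κ(M) = σ_max(M) / σ_min(M)`. -/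
def condNum {N C : Type*} [Fintype N] [Fintype C] (M : Matrix N C ℝ) : ℝ :=
  Real.sqrt (sigMaxSq M) / Real.sqrt (sigMinSq M)


lemma sqNorm_nonneg {ι : Type*} [Fintype ι] (v : ι → ℝ) : 0 ≤ sqNorm v :=
  Finset.sum_nonneg fun i _ => sq_nonneg _

lemma sqNorm_eq_dot {ι : Type*} [Fintype ι] (v : ι → ℝ) : sqNorm v = v ⬝ᵥ v := by
  simp [sqNorm, dotProduct, sq]

lemma eNorm_nonneg {ι : Type*} [Fintype ι] (v : ι → ℝ) : 0 ≤ eNorm v := Real.sqrt_nonneg _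

lemma eNorm_sq {ι : Type*} [Fintype ι] (v : ι → ℝ) : eNorm v ^ 2 = sqNorm v :=
  Real.sq_sqrt (sqNorm_nonneg v)

lemma sqNorm_eq_zero {ι : Type*} [Fintype ι] {v : ι → ℝ} (h : sqNorm v = 0) : v = 0 := by
  funext i
  have := (Finset.sum_eq_zero_iff_of_nonneg (fun i _ => sq_nonneg (v i))).1 h i (Finset.mem_univ i)
  simpa [sq] using this

lemma sqNorm_sum_elim {ι κ : Type*} [Fintype ι] [Fintype κ] (u : ι → ℝ) (v : κ → ℝ) :
    sqNorm (Sum.elim u v) = sqNorm u + sqNorm v := by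
  simp [sqNorm, Fintype.sum_sum_type]

lemma sqNorm_neg {ι : Type*} [Fintype ι] (v : ι → ℝ) : sqNorm (-v) = sqNorm v := by
  simp [sqNorm]

/-- Normal equations from minimality. -/
lemma normal_eq {ι κ : Type*} [Fintype ι] [Fintype κ] (M : Matrix ι κ ℝ) (v : ι → ℝ)
    (c : κ → ℝ) (hc : ∀ β, sqNorm (M.mulVec c - v) ≤ sqNorm (M.mulVec β - v)) :
    ∀ w, (M.mulVec w) ⬝ᵥ (M.mulVec c - v) = 0 := by
  intro w
  set a := M.mulVec c - v with ha
  set b := M.mulVec w with hb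
  set s := b ⬝ᵥ a with hs
  set q := sqNorm b with hq
  have hq0 : 0 ≤ q := sqNorm_nonneg _
  have key : ∀ t : ℝ, 0 ≤ 2 * t * s + t ^ 2 * q := by
    intro t
    have h := hc (c + t • w)
    have hexp : M.mulVec (c + t • w) - v = a + t • b := by
      simp [ha, hb, mulVec_add, mulVec_smul]
      abel
    rw [hexp] at h
    have : sqNorm (a + t • b) = sqNorm a + 2 * t * s + t ^ 2 * q := by
      rw [sqNorm_eq_dot, sqNorm_eq_dot, hq, sqNorm_eq_dot, hs]
      simp [dotProduct_add, add_dotProduct, dotProduct_smul, smul_dotProduct, smul_eq_mul,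
        dotProduct_comm b a]
      ring
    rw [this] at h
    linarith
  have h1 := key (-(s / (q + 1)))
  have hq1 : 0 < q + 1 := by linarith
  have : s ^ 2 * (q + 2) ≤ 0 := by
    have h2 : 2 * (-(s / (q + 1))) * s + (-(s / (q + 1))) ^ 2 * q
        = -(s ^ 2 * (q + 2)) / (q + 1) ^ 2 := by
      field_simp
      ring
    rw [h2] at h1
    have hpos : (0:ℝ) < (q+1)^2 := by positivity
    rcases (div_nonneg_iff).1 h1 with ⟨h3,_⟩ | ⟨_,h4⟩
    · linarith
    · nlinarith
  have hsq : s ^ 2 ≤ 0 := by nlinarith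
  have hs2 : s ^ 2 = 0 := le_antisymm hsq (sq_nonneg s)
  have hs0 : s = 0 := by
    have := pow_eq_zero_iff (n := 2) (by norm_num) |>.1 hs2
    exact this
  exact hs0

lemma eNorm_zero {ι : Type*} [Fintype ι] : eNorm (0 : ι → ℝ) = 0 := by
  simp [eNorm, sqNorm]

lemma sqNorm_smul_add {ι : Type*} [Fintype ι] (x y : ι → ℝ) (s t : ℝ) :
    sqNorm (s • x + t • y) = s^2 * (x ⬝ᵥ x) + 2*s*t*(x ⬝ᵥ y) + t^2 * (y ⬝ᵥ y) := by
  rw [sqNorm_eq_dot]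
  simp [dotProduct_add, add_dotProduct, dotProduct_smul, smul_dotProduct, smul_eq_mul,
    dotProduct_comm y x]
  ring

lemma sqNorm_smul_sub {ι : Type*} [Fintype ι] (x y : ι → ℝ) (s t : ℝ) :
    sqNorm (s • x - t • y) = s^2 * (x ⬝ᵥ x) - 2*s*t*(x ⬝ᵥ y) + t^2 * (y ⬝ᵥ y) := by
  rw [sub_eq_add_neg, ← neg_smul, sqNorm_smul_add]
  ring



/-- One-sided polarization bound from a subspace embedding. -/
lemma polar {K N C : Type*} [Fintype K] [Fintype N] [Fintype C]
    {P : Matrix K N ℝ} {A : Matrix N C ℝ} {δ : ℝ} (hδ : 0 ≤ δ)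
    (hP : IsSubspaceEmbedding P A δ) (a b : C → ℝ) :
    (A.mulVec a) ⬝ᵥ (A.mulVec b) - (P.mulVec (A.mulVec a)) ⬝ᵥ (P.mulVec (A.mulVec b)) ≤
      δ * eNorm (A.mulVec a) * eNorm (A.mulVec b) := by
  set u := A.mulVec a with hu
  set v := A.mulVec b with hv
  set α := eNorm u with hα
  set β := eNorm v with hβ
  have hα0 : 0 ≤ α := eNorm_nonneg _
  have hβ0 : 0 ≤ β := eNorm_nonneg _
  have hαsq : α ^ 2 = sqNorm u := eNorm_sq u
  have hβsq : β ^ 2 = sqNorm v := eNorm_sq v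
  by_cases hu0 : sqNorm u = 0
  · have h0 : u = 0 := sqNorm_eq_zero hu0
    rw [h0]
    simp [mulVec_zero, eNorm_zero]
    exact mul_nonneg (mul_nonneg hδ (eNorm_nonneg _)) (eNorm_nonneg _)
  by_cases hv0 : sqNorm v = 0
  · have h0 : v = 0 := sqNorm_eq_zero hv0
    rw [h0]
    simp [mulVec_zero, eNorm_zero]
    exact mul_nonneg (mul_nonneg hδ (eNorm_nonneg _)) (eNorm_nonneg _)
  have hαpos : 0 < α := lt_of_le_of_ne hα0 (by
    intro h; exact hu0 (by rw [← hαsq, ← h]; ring))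
  have hβpos : 0 < β := lt_of_le_of_ne hβ0 (by
    intro h; exact hv0 (by rw [← hβsq, ← h]; ring))
  have h1 := (hP (β • a + α • b)).1
  have h2 := (hP (β • a - α • b)).2
  have e1 : A.mulVec (β • a + α • b) = β • u + α • v := by
    simp [mulVec_add, mulVec_smul, hu, hv]
  have e2 : A.mulVec (β • a - α • b) = β • u - α • v := by
    simp [mulVec_sub, mulVec_smul, hu, hv]
  have e1' : (P * A).mulVec (β • a + α • b) = β • P.mulVec u + α • P.mulVec v := by
    rw [← mulVec_mulVec, e1]
    simp [mulVec_add, mulVec_smul]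
  have e2' : (P * A).mulVec (β • a - α • b) = β • P.mulVec u - α • P.mulVec v := by
    rw [← mulVec_mulVec, e2]
    simp [mulVec_sub, mulVec_smul]
  rw [e1, e1', sqNorm_smul_add, sqNorm_smul_add] at h1
  rw [e2, e2', sqNorm_smul_sub, sqNorm_smul_sub] at h2
  set Pu := P.mulVec u
  set Pv := P.mulVec v
  have huu : u ⬝ᵥ u = α ^ 2 := by rw [hαsq, sqNorm_eq_dot]
  have hvv : v ⬝ᵥ v = β ^ 2 := by rw [hβsq, sqNorm_eq_dot]
  rw [huu, hvv] at h1 h2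
  have key : (u ⬝ᵥ v) - (Pu ⬝ᵥ Pv) ≤ δ * α * β := by
    nlinarith [mul_pos hαpos hβpos]
  linarith [key]





lemma sqNorm_smul {ι : Type*} [Fintype ι] (c : ℝ) (v : ι → ℝ) :
    sqNorm (c • v) = c ^ 2 * sqNorm v := by
  simp [sqNorm, Finset.mul_sum, mul_pow]

lemma sqNorm_single {C : Type*} [Fintype C] [DecidableEq C] (i : C) :
    sqNorm (Pi.single i (1:ℝ)) = 1 := by
  classical
  simp [sqNorm, Pi.single_apply]

section sig
variable {N C : Type*} [Fintype N] [Fintype C] (M : Matrix N C ℝ)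

lemma sig_set_bddBelow :
    BddBelow {r : ℝ | ∃ x : C → ℝ, sqNorm x = 1 ∧ r = sqNorm (M.mulVec x)} := by
  refine ⟨0, ?_⟩
  rintro r ⟨x, -, rfl⟩
  exact sqNorm_nonneg _

lemma sqNorm_mulVec_le_frob (x : C → ℝ) :
    sqNorm (M.mulVec x) ≤ (∑ i, ∑ j, (M i j) ^ 2) * sqNorm x := by
  unfold sqNorm
  rw [Finset.sum_mul]
  apply Finset.sum_le_sum
  intro i _
  have := Finset.sum_mul_sq_le_sq_mul_sq Finset.univ (fun j => M i j) x
  simpa [Matrix.mulVec, dotProduct, sqNorm] using this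

lemma sig_set_bddAbove :
    BddAbove {r : ℝ | ∃ x : C → ℝ, sqNorm x = 1 ∧ r = sqNorm (M.mulVec x)} := by
  refine ⟨∑ i, ∑ j, (M i j) ^ 2, ?_⟩
  rintro r ⟨x, hx, rfl⟩
  have := sqNorm_mulVec_le_frob M x
  rw [hx, mul_one] at this
  exact this

lemma sig_set_nonempty [Nonempty C] :
    {r : ℝ | ∃ x : C → ℝ, sqNorm x = 1 ∧ r = sqNorm (M.mulVec x)}.Nonempty := by
  classical
  exact ⟨_, Pi.single (Classical.arbitrary C) 1, sqNorm_single _, rfl⟩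

lemma sigMinSq_mul_le (x : C → ℝ) :
    sigMinSq M * sqNorm x ≤ sqNorm (M.mulVec x) := by
  classical
  by_cases hx : sqNorm x = 0
  · rw [hx, mul_zero]
    exact sqNorm_nonneg (M.mulVec x)
  · have hxpos : 0 < sqNorm x := lt_of_le_of_ne (sqNorm_nonneg x) (Ne.symm hx)
    have hepos : 0 < eNorm x := Real.sqrt_pos.mpr hxpos
    set c := (eNorm x)⁻¹ with hc
    have hcx : sqNorm (c • x) = 1 := by
      rw [sqNorm_smul, hc, eNorm, inv_pow, Real.sq_sqrt (sqNorm_nonneg x)]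
      exact inv_mul_cancel₀ hx
    have hmem : sqNorm (M.mulVec (c • x)) ∈
        {r : ℝ | ∃ y : C → ℝ, sqNorm y = 1 ∧ r = sqNorm (M.mulVec y)} := ⟨c • x, hcx, rfl⟩
    have hle := csInf_le (sig_set_bddBelow M) hmem
    have heq : sqNorm (M.mulVec (c • x)) = c ^ 2 * sqNorm (M.mulVec x) := by
      rw [mulVec_smul, sqNorm_smul]
    rw [heq] at hle
    have hc2 : c ^ 2 * sqNorm x = 1 := by
      have := hcx
      rwa [sqNorm_smul] at this
    have hxne : sqNorm x ≠ 0 := hx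
    calc sigMinSq M * sqNorm x ≤ (c ^ 2 * sqNorm (M.mulVec x)) * sqNorm x :=
          mul_le_mul_of_nonneg_right hle (le_of_lt hxpos)
      _ = sqNorm (M.mulVec x) * (c ^ 2 * sqNorm x) := by ring
      _ = sqNorm (M.mulVec x) := by rw [hc2, mul_one]

lemma le_sigMaxSq_mul (x : C → ℝ) :
    sqNorm (M.mulVec x) ≤ sigMaxSq M * sqNorm x := by
  classical
  by_cases hx : sqNorm x = 0
  · have h0 : x = 0 := sqNorm_eq_zero hx
    rw [hx, mul_zero, h0, mulVec_zero]
    have : sqNorm (0 : N → ℝ) = 0 := by simp [sqNorm]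
    rw [this]
  · have hxpos : 0 < sqNorm x := lt_of_le_of_ne (sqNorm_nonneg x) (Ne.symm hx)
    have hepos : 0 < eNorm x := Real.sqrt_pos.mpr hxpos
    set c := (eNorm x)⁻¹ with hc
    have hcx : sqNorm (c • x) = 1 := by
      rw [sqNorm_smul, hc, eNorm, inv_pow, Real.sq_sqrt (sqNorm_nonneg x)]
      exact inv_mul_cancel₀ hx
    have hmem : sqNorm (M.mulVec (c • x)) ∈
        {r : ℝ | ∃ y : C → ℝ, sqNorm y = 1 ∧ r = sqNorm (M.mulVec y)} := ⟨c • x, hcx, rfl⟩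
    have hle := le_csSup (sig_set_bddAbove M) hmem
    have heq : sqNorm (M.mulVec (c • x)) = c ^ 2 * sqNorm (M.mulVec x) := by
      rw [mulVec_smul, sqNorm_smul]
    rw [heq] at hle
    have hc2 : c ^ 2 * sqNorm x = 1 := by
      have := hcx
      rwa [sqNorm_smul] at this
    have hQ : sqNorm (M.mulVec x) = (c ^ 2 * sqNorm (M.mulVec x)) * sqNorm x := by
      rw [show (c ^ 2 * sqNorm (M.mulVec x)) * sqNorm x
          = sqNorm (M.mulVec x) * (c ^ 2 * sqNorm x) by ring, hc2, mul_one]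
    rw [hQ]
    exact mul_le_mul_of_nonneg_right hle (le_of_lt hxpos)

lemma le_sigMinSq [Nonempty C] (c : ℝ) (h : ∀ x : C → ℝ, sqNorm x = 1 → c ≤ sqNorm (M.mulVec x)) :
    c ≤ sigMinSq M := by
  apply le_csInf (sig_set_nonempty M)
  rintro r ⟨x, hx, rfl⟩
  exact h x hx

lemma sigMinSq_le_sigMaxSq [Nonempty C] : sigMinSq M ≤ sigMaxSq M := by
  classical
  obtain ⟨r, hr⟩ := sig_set_nonempty M
  exact le_trans (csInf_le (sig_set_bddBelow M) hr) (le_csSup (sig_set_bddAbove M) hr)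

end sig

lemma vecMul_eq_transpose_mulVec {ι κ : Type*} [Fintype ι] [Fintype κ]
    (Q : Matrix ι κ ℝ) (v : ι → ℝ) : v ᵥ* Q = Qᵀ.mulVec v := by
  rw [← Matrix.transpose_transpose Q, Matrix.vecMul_transpose, Matrix.transpose_transpose]

lemma dot_transpose {ι κ : Type*} [Fintype ι] [Fintype κ] (B : Matrix ι κ ℝ)
    (x : κ → ℝ) (u : ι → ℝ) : x ⬝ᵥ (Bᵀ.mulVec u) = (B.mulVec x) ⬝ᵥ u := by
  rw [Matrix.dotProduct_mulVec, Matrix.vecMul_transpose]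

lemma dot_le_eNorm_mul {ι : Type*} [Fintype ι] (u v : ι → ℝ) :
    u ⬝ᵥ v ≤ eNorm u * eNorm v := by
  have h := Finset.sum_mul_sq_le_sq_mul_sq Finset.univ u v
  have h2 : (u ⬝ᵥ v) ^ 2 ≤ sqNorm u * sqNorm v := by
    simpa [dotProduct, sqNorm] using h
  have h3 : u ⬝ᵥ v ≤ |u ⬝ᵥ v| := le_abs_self _
  have h4 : |u ⬝ᵥ v| = Real.sqrt ((u ⬝ᵥ v) ^ 2) := (Real.sqrt_sq_eq_abs _).symm
  calc u ⬝ᵥ v ≤ Real.sqrt ((u ⬝ᵥ v) ^ 2) := h4 ▸ h3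
    _ ≤ Real.sqrt (sqNorm u * sqNorm v) := Real.sqrt_le_sqrt h2
    _ = eNorm u * eNorm v := by
        rw [Real.sqrt_mul (sqNorm_nonneg u)]; rfl

lemma eNorm_mono {ι κ : Type*} [Fintype ι] [Fintype κ] {u : ι → ℝ} {v : κ → ℝ}
    (h : sqNorm u ≤ sqNorm v) : eNorm u ≤ eNorm v := Real.sqrt_le_sqrt h

lemma eNorm_triangle {ι : Type*} [Fintype ι] (u v : ι → ℝ) :
    eNorm (u + v) ≤ eNorm u + eNorm v := by
  have hdot := dot_le_eNorm_mul u v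
  have hexp : sqNorm (u + v) = sqNorm u + 2 * (u ⬝ᵥ v) + sqNorm v := by
    have := sqNorm_smul_add u v 1 1
    simpa [sqNorm_eq_dot] using this
  have h2 : sqNorm (u + v) ≤ (eNorm u + eNorm v) ^ 2 := by
    have hu := eNorm_sq u
    have hv := eNorm_sq v
    nlinarith [eNorm_nonneg u, eNorm_nonneg v]
  calc eNorm (u + v) = Real.sqrt (sqNorm (u + v)) := rfl
    _ ≤ Real.sqrt ((eNorm u + eNorm v) ^ 2) := Real.sqrt_le_sqrt h2
    _ = |eNorm u + eNorm v| := Real.sqrt_sq_eq_abs _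
    _ = eNorm u + eNorm v := abs_of_nonneg (add_nonneg (eNorm_nonneg u) (eNorm_nonneg v))



lemma augment_mulVec {n d : ℕ} (X : Matrix (Fin n) (Fin d) ℝ) (Y : Fin n → ℝ)
    (u : Fin d → ℝ) (t : ℝ) :
    (augment X Y).mulVec (Fin.snoc u t) = X.mulVec u + t • Y := by
  funext i
  simp only [augment, Matrix.mulVec, dotProduct, Matrix.of_apply, Pi.add_apply, Pi.smul_apply,
    smul_eq_mul]
  rw [Fin.sum_univ_castSucc]
  simp [Fin.snoc_castSucc, Fin.snoc_last, mul_comm]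

section quad
variable {d : ℕ}

lemma quad_inv_le (Q : Matrix (Fin d) (Fin d) ℝ) (hQsym : Qᵀ = Q)
    (hQu : IsUnit Q.det) (hpsd : ∀ y, 0 ≤ y ⬝ᵥ Q.mulVec y) (x y : Fin d → ℝ) :
    2 * (x ⬝ᵥ y) - y ⬝ᵥ Q.mulVec y ≤ x ⬝ᵥ Q⁻¹.mulVec x := by
  set u := y - Q⁻¹.mulVec x with hu
  have h0 := hpsd u
  have hQQ : Q.mulVec (Q⁻¹.mulVec x) = x := by
    rw [Matrix.mulVec_mulVec, Matrix.mul_nonsing_inv Q hQu, Matrix.one_mulVec]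
  have hQu' : Q.mulVec u = Q.mulVec y - x := by
    rw [hu, Matrix.mulVec_sub, hQQ]
  have hcross : (Q⁻¹.mulVec x) ⬝ᵥ (Q.mulVec y) = x ⬝ᵥ y := by
    rw [Matrix.dotProduct_mulVec, vecMul_eq_transpose_mulVec, hQsym, hQQ]
  have hself : (Q⁻¹.mulVec x) ⬝ᵥ x = x ⬝ᵥ (Q⁻¹.mulVec x) := dotProduct_comm _ _
  have hexp : u ⬝ᵥ Q.mulVec u
      = y ⬝ᵥ Q.mulVec y - y ⬝ᵥ x - (x ⬝ᵥ y) + x ⬝ᵥ (Q⁻¹.mulVec x) := by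
    rw [hu, hQu', sub_dotProduct, dotProduct_sub, dotProduct_sub,
      hcross, hself]
    ring
  have hyx : y ⬝ᵥ x = x ⬝ᵥ y := dotProduct_comm _ _
  rw [hexp, hyx] at h0
  linarith

lemma inv_quad_nonneg (Q : Matrix (Fin d) (Fin d) ℝ) (hQsym : Qᵀ = Q)
    (hQu : IsUnit Q.det) (hpsd : ∀ y, 0 ≤ y ⬝ᵥ Q.mulVec y) (x : Fin d → ℝ) :
    0 ≤ x ⬝ᵥ Q⁻¹.mulVec x := by
  set y := Q⁻¹.mulVec x with hy
  have hQQ : Q.mulVec y = x := by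
    rw [hy, Matrix.mulVec_mulVec, Matrix.mul_nonsing_inv Q hQu, Matrix.one_mulVec]
  calc (0:ℝ) ≤ y ⬝ᵥ Q.mulVec y := hpsd y
    _ = y ⬝ᵥ x := by rw [hQQ]
    _ = x ⬝ᵥ y := dotProduct_comm _ _

lemma inv_quad_le (Q1 Q2 : Matrix (Fin d) (Fin d) ℝ)
    (h1sym : Q1ᵀ = Q1) (h2sym : Q2ᵀ = Q2)
    (h1u : IsUnit Q1.det) (h2u : IsUnit Q2.det)
    (h1psd : ∀ y, 0 ≤ y ⬝ᵥ Q1.mulVec y)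
    {c : ℝ} (hc : 0 < c)
    (hcmp : ∀ y, c * (y ⬝ᵥ Q1.mulVec y) ≤ y ⬝ᵥ Q2.mulVec y) (x : Fin d → ℝ) :
    x ⬝ᵥ Q2⁻¹.mulVec x ≤ c⁻¹ * (x ⬝ᵥ Q1⁻¹.mulVec x) := by
  set y := Q2⁻¹.mulVec x with hy
  have hQQ : Q2.mulVec y = x := by
    rw [hy, Matrix.mulVec_mulVec, Matrix.mul_nonsing_inv Q2 h2u, Matrix.one_mulVec]
  have hxy : y ⬝ᵥ Q2.mulVec y = x ⬝ᵥ y := by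
    rw [hQQ, dotProduct_comm]
  have hquad := quad_inv_le Q1 h1sym h1u h1psd (c⁻¹ • x) y
  have hsm1 : (c⁻¹ • x) ⬝ᵥ y = c⁻¹ * (x ⬝ᵥ y) := smul_dotProduct _ _ _
  have hsm2 : (c⁻¹ • x) ⬝ᵥ Q1⁻¹.mulVec (c⁻¹ • x) = c⁻¹ * c⁻¹ * (x ⬝ᵥ Q1⁻¹.mulVec x) := by
    rw [Matrix.mulVec_smul, smul_dotProduct, dotProduct_smul]
    simp [smul_eq_mul]
    ring
  rw [hsm1, hsm2] at hquad
  have hcmpy := hcmp y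
  -- x ⬝ᵥ Q2⁻¹ x = x ⬝ᵥ y
  have hgoal : x ⬝ᵥ Q2⁻¹.mulVec x = x ⬝ᵥ y := by rw [hy]
  rw [hgoal]
  -- from hquad : 2 c⁻¹ (x⬝y) - y⬝Q1y ≤ c⁻² (x⬝Q1⁻¹x)
  -- multiply by c: 2 (x⬝y) - c y⬝Q1y ≤ c⁻¹ (x⬝Q1⁻¹x)
  -- with hcmpy: c y⬝Q1y ≤ y⬝Q2y = x⬝y  ⇒ x⬝y ≤ 2(x⬝y) - c y⬝Q1y ≤ c⁻¹ (...)
  have hcne : c ≠ 0 := ne_of_gt hc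
  obtain ⟨t, ht⟩ : ∃ t, t = x ⬝ᵥ y := ⟨_, rfl⟩
  obtain ⟨A, hA⟩ : ∃ A, A = y ⬝ᵥ Q1.mulVec y := ⟨_, rfl⟩
  obtain ⟨B, hB⟩ : ∃ B, B = x ⬝ᵥ Q1⁻¹.mulVec x := ⟨_, rfl⟩
  rw [← ht, ← hA, ← hB] at hquad
  rw [← hA] at hcmpy
  rw [← ht] at hxy
  rw [← hB]
  have hmul := mul_le_mul_of_nonneg_left hquad (le_of_lt hc)
  have hL : c * (2 * (c⁻¹ * t) - A) = 2 * t - c * A := by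
    field_simp
  have hR : c * (c⁻¹ * c⁻¹ * B) = c⁻¹ * B := by
    field_simp
  rw [hL, hR] at hmul
  linarith [hcmpy, hxy, hmul, ht, hgoal]

lemma diag_as_quad (Q : Matrix (Fin d) (Fin d) ℝ) (i : Fin d) :
    Q i i = (Pi.single i (1:ℝ)) ⬝ᵥ Q.mulVec (Pi.single i 1) := by
  rw [Matrix.mulVec_single_one, single_dotProduct]
  simp

end quad

/-- The `ℓ₂` Wasserstein weight of the sketched Gaussian posterior
`N(μ', (Z'ᵀZ')⁻¹)` is at most `(1 + (κ(Z)/ρ)·ε)` times that of the original posterior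
`N(μ, (ZᵀZ)⁻¹)`, where the weight of a Gaussian `N(m, Σ)` equals
`(‖m‖² + trace Σ)^{1/2}`. -/
lemma sum_elim_sub {ι κ : Type*} (a c : ι → ℝ) (b d : κ → ℝ) :
    Sum.elim a b - Sum.elim c d = Sum.elim (a - c) (b - d) := by
  funext x; cases x <;> simp

lemma dot_sum_elim {ι κ : Type*} [Fintype ι] [Fintype κ] (a c : ι → ℝ) (b d : κ → ℝ) :
    (Sum.elim a b) ⬝ᵥ (Sum.elim c d) = a ⬝ᵥ c + b ⬝ᵥ d := by
  simp [dotProduct, Fintype.sum_sum_type]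



lemma arith_frac {ε : ℝ} (hε : 0 < ε) (hε' : ε ≤ 1/2) : (1 - ε/3)⁻¹ ≤ 1 + 2/5*ε := by
  rw [inv_eq_one_div, div_le_iff₀ (by linarith : (0:ℝ) < 1 - ε/3)]
  nlinarith

lemma arith_one_add_sq {x c : ℝ} (h : x ≤ c) (hc : 0 < c) (hx : 0 ≤ x) :
    1 + x ≤ (1 + c) ^ 2 := by nlinarith

lemma arith_key {ε u R : ℝ} (hε : 0 < ε) (hε' : ε ≤ 1/2) (hu : 0 < u) (hR : 0 ≤ R)
    (h : (1 - ε/3) * u^2 ≤ ε/3 * u * R) : u ≤ 2*ε/5 * R := by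
  nlinarith [mul_nonneg hu.le hR, sq_nonneg u, mul_pos hu hu]

set_option maxHeartbeats 1000000 in
theorem posterior_wasserstein_weight_bound {n d k : ℕ} {ε : ℝ} (hε : 0 < ε)
    (hε' : ε ≤ 1 / 2)
    (X : Matrix (Fin n) (Fin d) ℝ) (Y : Fin n → ℝ)
    (P : Matrix (Fin k) (Fin n) ℝ)
    (hP : IsSubspaceEmbedding P (augment X Y) (ε / 3))
    (m : Fin d → ℝ) (S : Matrix (Fin d) (Fin d) ℝ) (hS : IsUnit S.det)
    (Z : Matrix (Fin n ⊕ Fin d) (Fin d) ℝ) (hZ : Z = Matrix.fromRows X S)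
    (z : Fin n ⊕ Fin d → ℝ) (hz : z = Sum.elim Y (S.mulVec m))
    (Z' : Matrix (Fin k ⊕ Fin d) (Fin d) ℝ) (hZ' : Z' = Matrix.fromRows (P * X) S)
    (z' : Fin k ⊕ Fin d → ℝ) (hz' : z' = Sum.elim (P.mulVec Y) (S.mulVec m))
    (μ μ' : Fin d → ℝ)
    (hμ : ∀ β : Fin d → ℝ, sqNorm (Z.mulVec μ - z) ≤ sqNorm (Z.mulVec β - z))
    (hμ' : ∀ β : Fin d → ℝ, sqNorm (Z'.mulVec μ' - z') ≤ sqNorm (Z'.mulVec β - z'))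
    (ρ : ℝ) (hρ₀ : 0 < ρ) (hρ₁ : ρ ≤ 1) (hZμ : eNorm (Z.mulVec μ) ≥ ρ * eNorm z) :
    Real.sqrt (sqNorm μ' + ((Z'ᵀ * Z')⁻¹).trace) ≤
      (1 + condNum Z / ρ * ε) * Real.sqrt (sqNorm μ + ((Zᵀ * Z)⁻¹).trace) := by
  classical
  rcases Nat.eq_zero_or_pos d with hd | hd
  · subst hd
    have h1 : sqNorm μ' = 0 := by simp [sqNorm]
    have h2 : sqNorm μ = 0 := by simp [sqNorm]
    have h3 : ((Z'ᵀ * Z')⁻¹).trace = 0 := by simp [Matrix.trace]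
    have h4 : ((Zᵀ * Z)⁻¹).trace = 0 := by simp [Matrix.trace]
    rw [h1, h2, h3, h4, add_zero, Real.sqrt_zero, mul_zero]
  haveI hne : Nonempty (Fin d) := ⟨⟨0, hd⟩⟩
  set δ : ℝ := ε / 3 with hδdef
  have hδ0 : 0 < δ := by positivity
  have hδ6 : δ ≤ 1 / 6 := by rw [hδdef]; linarith
  set A := augment X Y with hA
  -- basic mulVec decompositions
  have hZv : ∀ v, Z.mulVec v = Sum.elim (X.mulVec v) (S.mulVec v) := by
    intro v; rw [hZ, Matrix.fromRows_mulVec]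
  have hZ'v : ∀ v, Z'.mulVec v = Sum.elim (P.mulVec (X.mulVec v)) (S.mulVec v) := by
    intro v; rw [hZ', Matrix.fromRows_mulVec, Matrix.mulVec_mulVec]
  have hAsnoc : ∀ v : Fin d → ℝ, A.mulVec (Fin.snoc v 0) = X.mulVec v := by
    intro v; rw [hA, augment_mulVec]; simp
  -- residual
  set r := X.mulVec μ - Y with hr
  have hAr : A.mulVec (Fin.snoc μ (-1)) = r := by
    rw [hA, augment_mulVec, hr]
    funext i
    simp
    ring
  set e := μ' - μ with he
  -- squared norms of stacked vectors
  have hsqZ : ∀ v, sqNorm (Z.mulVec v) = sqNorm (X.mulVec v) + sqNorm (S.mulVec v) := by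
    intro v; rw [hZv, sqNorm_sum_elim]
  have hsqZ' : ∀ v, sqNorm (Z'.mulVec v) = sqNorm (P.mulVec (X.mulVec v)) + sqNorm (S.mulVec v) := by
    intro v; rw [hZ'v, sqNorm_sum_elim]
  -- embedding lower bound pointwise, and the comparison of quadratic forms
  have hemb : ∀ v : Fin d → ℝ, (1 - δ) * sqNorm (X.mulVec v) ≤ sqNorm (P.mulVec (X.mulVec v)) := by
    intro v
    have h := (hP (Fin.snoc v 0)).1
    rw [← Matrix.mulVec_mulVec, hAsnoc v] at h
    exact h
  have hcmp : ∀ v : Fin d → ℝ, (1 - δ) * sqNorm (Z.mulVec v) ≤ sqNorm (Z'.mulVec v) := by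
    intro v
    have h1 := hemb v
    have h2 : (1 - δ) * sqNorm (S.mulVec v) ≤ sqNorm (S.mulVec v) := by
      nlinarith [sqNorm_nonneg (S.mulVec v)]
    rw [hsqZ, hsqZ']
    linarith
  -- normal equations
  have NZ := normal_eq Z z μ hμ
  have NZ' := normal_eq Z' z' μ' hμ'
  -- key residual identities
  have hZμz : Z.mulVec μ - z = Sum.elim r (S.mulVec (μ - m)) := by
    rw [hZv, hz, sum_elim_sub, hr, Matrix.mulVec_sub]
  have hZ'μz' : Z'.mulVec μ - z' = Sum.elim (P.mulVec r) (S.mulVec (μ - m)) := by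
    rw [hZ'v, hz', sum_elim_sub, hr, Matrix.mulVec_sub, Matrix.mulVec_sub]
  -- Step A : sqNorm (Z' e) = (Xe)⬝r - (PXe)⬝(Pr)
  have hNZe : (X.mulVec e) ⬝ᵥ r + (S.mulVec e) ⬝ᵥ (S.mulVec (μ - m)) = 0 := by
    have h := NZ e
    rw [hZμz, hZv, dot_sum_elim] at h
    exact h
  have hstepA : sqNorm (Z'.mulVec e)
      = (X.mulVec e) ⬝ᵥ r - (P.mulVec (X.mulVec e)) ⬝ᵥ (P.mulVec r) := by
    have h := NZ' e
    have hdecomp : Z'.mulVec μ' - z' = Z'.mulVec e + (Z'.mulVec μ - z') := by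
      rw [he, Matrix.mulVec_sub]
      abel
    rw [hdecomp, dotProduct_add] at h
    have h2 : (Z'.mulVec e) ⬝ᵥ (Z'.mulVec μ - z')
        = (P.mulVec (X.mulVec e)) ⬝ᵥ (P.mulVec r) + (S.mulVec e) ⬝ᵥ (S.mulVec (μ - m)) := by
      rw [hZ'μz', hZ'v, dot_sum_elim]
    rw [h2] at h
    rw [sqNorm_eq_dot]
    linarith
  -- Step B : polarization bound
  have hpolar : (X.mulVec e) ⬝ᵥ r - (P.mulVec (X.mulVec e)) ⬝ᵥ (P.mulVec r)
      ≤ δ * eNorm (X.mulVec e) * eNorm r := by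
    have h := polar (le_of_lt hδ0) hP (Fin.snoc e 0) (Fin.snoc μ (-1))
    rw [hAsnoc, hAr] at h
    exact h
  -- Step C/D/E : eNorm (Z e) ≤ (2ε/5) eNorm r  (squared version)
  have hXeZe : eNorm (X.mulVec e) ≤ eNorm (Z.mulVec e) := by
    apply eNorm_mono
    rw [hsqZ]
    linarith [sqNorm_nonneg (S.mulVec e)]
  have hEcore : (1 - δ) * sqNorm (Z.mulVec e) ≤ δ * eNorm (Z.mulVec e) * eNorm r := by
    have h1 := hcmp e
    have h2 : sqNorm (Z'.mulVec e) ≤ δ * eNorm (X.mulVec e) * eNorm r := by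
      rw [hstepA]; exact hpolar
    have h3 : δ * eNorm (X.mulVec e) * eNorm r ≤ δ * eNorm (Z.mulVec e) * eNorm r := by
      have := mul_le_mul_of_nonneg_left hXeZe (le_of_lt hδ0)
      exact mul_le_mul_of_nonneg_right this (eNorm_nonneg r)
    linarith
  have hZe_r : sqNorm (Z.mulVec e) ≤ (2 * ε / 5) ^ 2 * sqNorm r := by
    obtain ⟨u, hu⟩ : ∃ u, eNorm (Z.mulVec e) = u := ⟨_, rfl⟩
    obtain ⟨R, hR⟩ : ∃ R, eNorm r = R := ⟨_, rfl⟩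
    have hu0 : 0 ≤ u := hu ▸ eNorm_nonneg _
    have hR0 : 0 ≤ R := hR ▸ eNorm_nonneg _
    have husq : sqNorm (Z.mulVec e) = u ^ 2 := by rw [← hu, eNorm_sq]
    have hRsq : sqNorm r = R ^ 2 := by rw [← hR, eNorm_sq]
    have hEc : (1 - ε/3) * u ^ 2 ≤ ε/3 * u * R := by
      rw [hδdef] at hEcore
      rw [husq, hu, hR] at hEcore
      exact hEcore
    rw [husq, hRsq]
    rcases eq_or_lt_of_le hu0 with h0 | hpos
    · rw [← h0]
      have hz2 : ((0:ℝ)) ^ 2 = 0 := by norm_num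
      rw [hz2]
      positivity
    · have hkey : u ≤ 2 * ε / 5 * R := arith_key hε hε' hpos hR0 hEc
      have hrhs : 0 ≤ 2 * ε / 5 * R := by positivity
      calc u ^ 2 ≤ (2 * ε / 5 * R) ^ 2 := pow_le_pow_left₀ hu0 hkey 2
        _ = (2 * ε / 5) ^ 2 * R ^ 2 := by ring
  -- Step F/G/H : sqNorm r ≤ sqNorm z ≤ sqNorm (Z μ) / ρ²
  have hF : sqNorm r ≤ sqNorm (Z.mulVec μ - z) := by
    rw [hZμz, sqNorm_sum_elim]
    linarith [sqNorm_nonneg (S.mulVec (μ - m))]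
  have hG : sqNorm (Z.mulVec μ - z) ≤ sqNorm z := by
    have h := hμ 0
    rwa [Matrix.mulVec_zero, zero_sub, sqNorm_neg] at h
  have hH : ρ ^ 2 * sqNorm z ≤ sqNorm (Z.mulVec μ) := by
    have h1 : (ρ * eNorm z) ^ 2 ≤ (eNorm (Z.mulVec μ)) ^ 2 :=
      pow_le_pow_left₀ (mul_nonneg (le_of_lt hρ₀) (eNorm_nonneg z)) hZμ 2
    have h2 : (ρ * eNorm z) ^ 2 = ρ ^ 2 * sqNorm z := by rw [mul_pow, eNorm_sq]
    rw [h2, eNorm_sq] at h1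
    exact h1
  -- Step I/J : extreme singular values
  have hI : sqNorm (Z.mulVec μ) ≤ sigMaxSq Z * sqNorm μ := le_sigMaxSq_mul Z μ
  have hJ : sigMinSq Z * sqNorm e ≤ sqNorm (Z.mulVec e) := sigMinSq_mul_le Z e
  -- Step K : sigMinSq Z > 0
  have hK : 0 < sigMinSq Z := by
    set F := ∑ i, ∑ j, (S⁻¹ i j) ^ 2 with hFdef
    have hF0 : 0 ≤ F := by positivity
    have hFpos : 0 < F := by
      rcases eq_or_lt_of_le hF0 with h0 | h
      · exfalso
        have hzz : ∀ i j, S⁻¹ i j = 0 := by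
          intro i j
          have h1 := (Finset.sum_eq_zero_iff_of_nonneg
            (fun i _ => Finset.sum_nonneg fun j _ => sq_nonneg (S⁻¹ i j))).1 h0.symm i
            (Finset.mem_univ i)
          have h2 := (Finset.sum_eq_zero_iff_of_nonneg (fun j _ => sq_nonneg (S⁻¹ i j))).1 h1 j
            (Finset.mem_univ j)
          exact pow_eq_zero_iff (two_ne_zero) |>.1 h2
        have hSinv : S⁻¹ = 0 := by
          funext i j; exact hzz i j
        have h1 := Matrix.nonsing_inv_mul S hS
        rw [hSinv, Matrix.zero_mul] at h1
        have := congrFun (congrFun h1 ⟨0, hd⟩) ⟨0, hd⟩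
        simp [Matrix.one_apply] at this
      · exact h
    have hlow : ∀ x : Fin d → ℝ, sqNorm x = 1 → F⁻¹ ≤ sqNorm (Z.mulVec x) := by
      intro x hx
      have h1 : S⁻¹.mulVec (S.mulVec x) = x := by
        rw [Matrix.mulVec_mulVec, Matrix.nonsing_inv_mul S hS, Matrix.one_mulVec]
      have h2 : sqNorm x ≤ F * sqNorm (S.mulVec x) := by
        calc sqNorm x = sqNorm (S⁻¹.mulVec (S.mulVec x)) := by rw [h1]
          _ ≤ F * sqNorm (S.mulVec x) := sqNorm_mulVec_le_frob S⁻¹ _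
      rw [hx] at h2
      have h3 : F⁻¹ ≤ sqNorm (S.mulVec x) := by
        rw [inv_eq_one_div, div_le_iff₀ hFpos]
        linarith [h2]
      calc F⁻¹ ≤ sqNorm (S.mulVec x) := h3
        _ ≤ sqNorm (Z.mulVec x) := by
            rw [hsqZ]
            nlinarith [sqNorm_nonneg (X.mulVec x)]
    have := le_sigMinSq Z F⁻¹ hlow
    have hFinv : 0 < F⁻¹ := inv_pos.mpr hFpos
    linarith
  have hsmaxpos : 0 < sigMaxSq Z := lt_of_lt_of_le hK (sigMinSq_le_sigMaxSq Z)
  -- condition number facts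
  set κ := condNum Z with hκ
  have hκval : κ = Real.sqrt (sigMaxSq Z) / Real.sqrt (sigMinSq Z) := rfl
  have hsminroot : 0 < Real.sqrt (sigMinSq Z) := Real.sqrt_pos.mpr hK
  have hκ1 : 1 ≤ κ := by
    rw [hκval, le_div_iff₀ hsminroot, one_mul]
    exact Real.sqrt_le_sqrt (sigMinSq_le_sigMaxSq Z)
  have hκpos : 0 < κ := lt_of_lt_of_le one_pos hκ1
  have hκsq : κ ^ 2 = sigMaxSq Z / sigMinSq Z := by
    rw [hκval, div_pow, Real.sq_sqrt (le_of_lt hsmaxpos), Real.sq_sqrt (le_of_lt hK)]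
  -- Step L : sqNorm e ≤ c² sqNorm μ with c = (2/5) (κ/ρ) ε
  set c := 2 / 5 * (κ / ρ) * ε with hcdef
  have hc0 : 0 < c := by
    apply mul_pos (mul_pos (by norm_num) (div_pos hκpos hρ₀)) hε
  have hL : sqNorm e ≤ c ^ 2 * sqNorm μ := by
    have chain1 : sigMinSq Z * sqNorm e ≤ (2 * ε / 5) ^ 2 * (sigMaxSq Z / ρ ^ 2 * sqNorm μ) := by
      have s1 : sqNorm (Z.mulVec e) ≤ (2 * ε / 5) ^ 2 * sqNorm r := hZe_r
      have s2 : sqNorm r ≤ sqNorm z := le_trans hF hG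
      have s3 : sqNorm z ≤ sigMaxSq Z / ρ ^ 2 * sqNorm μ := by
        have hρ2 : 0 < ρ ^ 2 := by positivity
        rw [div_mul_eq_mul_div, le_div_iff₀ hρ2]
        calc sqNorm z * ρ ^ 2 = ρ ^ 2 * sqNorm z := by ring
          _ ≤ sqNorm (Z.mulVec μ) := hH
          _ ≤ sigMaxSq Z * sqNorm μ := hI
      have h25 : (0:ℝ) ≤ (2 * ε / 5) ^ 2 := by positivity
      calc sigMinSq Z * sqNorm e ≤ sqNorm (Z.mulVec e) := hJ
        _ ≤ (2 * ε / 5) ^ 2 * sqNorm r := s1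
        _ ≤ (2 * ε / 5) ^ 2 * (sigMaxSq Z / ρ ^ 2 * sqNorm μ) := by
            apply mul_le_mul_of_nonneg_left _ h25
            exact le_trans s2 s3
    have hceq : (2 * ε / 5) ^ 2 * (sigMaxSq Z / ρ ^ 2) = c ^ 2 * sigMinSq Z := by
      have hx1 : c ^ 2 = (2/5) ^ 2 * (κ ^ 2 / ρ ^ 2) * ε ^ 2 := by rw [hcdef]; ring
      rw [hx1, hκsq]
      have hρne : ρ ≠ 0 := ne_of_gt hρ₀
      have hsne : sigMinSq Z ≠ 0 := ne_of_gt hK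
      field_simp
    have hchain2 : sigMinSq Z * sqNorm e ≤ sigMinSq Z * (c ^ 2 * sqNorm μ) := by
      calc sigMinSq Z * sqNorm e
          ≤ (2 * ε / 5) ^ 2 * (sigMaxSq Z / ρ ^ 2 * sqNorm μ) := chain1
        _ = ((2 * ε / 5) ^ 2 * (sigMaxSq Z / ρ ^ 2)) * sqNorm μ := by ring
        _ = (c ^ 2 * sigMinSq Z) * sqNorm μ := by rw [hceq]
        _ = sigMinSq Z * (c ^ 2 * sqNorm μ) := by ring
    exact le_of_mul_le_mul_left hchain2 hK
  -- Step M : sqNorm μ' ≤ (1+c)² sqNorm μ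
  have heNe : eNorm e ≤ c * eNorm μ := by
    have h1 : Real.sqrt (sqNorm e) ≤ Real.sqrt (c ^ 2 * sqNorm μ) := Real.sqrt_le_sqrt hL
    rw [Real.sqrt_mul (by positivity : (0:ℝ) ≤ c ^ 2), Real.sqrt_sq (le_of_lt hc0)] at h1
    exact h1
  have hμ'e : μ' = μ + e := by rw [he]; abel
  have hμ'bound : eNorm μ' ≤ (1 + c) * eNorm μ := by
    calc eNorm μ' = eNorm (μ + e) := by rw [← hμ'e]
      _ ≤ eNorm μ + eNorm e := eNorm_triangle μ e
      _ ≤ eNorm μ + c * eNorm μ := by linarith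
      _ = (1 + c) * eNorm μ := by ring
  have hM : sqNorm μ' ≤ (1 + c) ^ 2 * sqNorm μ := by
    have h1 : (eNorm μ') ^ 2 ≤ ((1 + c) * eNorm μ) ^ 2 :=
      pow_le_pow_left₀ (eNorm_nonneg μ') hμ'bound 2
    rw [eNorm_sq, mul_pow, eNorm_sq] at h1
    exact h1
  -- Step N : trace bound
  set Q1 := Zᵀ * Z with hQ1
  set Q2 := Z'ᵀ * Z' with hQ2
  have hq1 : ∀ x, x ⬝ᵥ Q1.mulVec x = sqNorm (Z.mulVec x) := by
    intro x
    rw [hQ1, ← Matrix.mulVec_mulVec, dot_transpose, ← sqNorm_eq_dot]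
  have hq2 : ∀ x, x ⬝ᵥ Q2.mulVec x = sqNorm (Z'.mulVec x) := by
    intro x
    rw [hQ2, ← Matrix.mulVec_mulVec, dot_transpose, ← sqNorm_eq_dot]
  have h1sym : Q1ᵀ = Q1 := by rw [hQ1, Matrix.transpose_mul, Matrix.transpose_transpose]
  have h2sym : Q2ᵀ = Q2 := by rw [hQ2, Matrix.transpose_mul, Matrix.transpose_transpose]
  have psd1 : ∀ x, 0 ≤ x ⬝ᵥ Q1.mulVec x := fun x => by rw [hq1]; exact sqNorm_nonneg _
  have psd2 : ∀ x, 0 ≤ x ⬝ᵥ Q2.mulVec x := fun x => by rw [hq2]; exact sqNorm_nonneg _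
  have h1u : IsUnit Q1.det := by
    rw [isUnit_iff_ne_zero]
    intro h0
    obtain ⟨v, hv0, hv⟩ := Matrix.exists_mulVec_eq_zero_iff.mpr h0
    have h1 : sqNorm (Z.mulVec v) = 0 := by rw [← hq1, hv, dotProduct_zero]
    have h2 : 0 < sqNorm v := by
      rcases eq_or_lt_of_le (sqNorm_nonneg v) with h | h
      · exact absurd (sqNorm_eq_zero h.symm) hv0
      · exact h
    have h3 := sigMinSq_mul_le Z v
    rw [h1] at h3
    have h4 : 0 < sigMinSq Z * sqNorm v := mul_pos hK h2
    linarith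
  have h2u : IsUnit Q2.det := by
    rw [isUnit_iff_ne_zero]
    intro h0
    obtain ⟨v, hv0, hv⟩ := Matrix.exists_mulVec_eq_zero_iff.mpr h0
    have h1 : sqNorm (Z'.mulVec v) = 0 := by rw [← hq2, hv, dotProduct_zero]
    have h2 : 0 < sqNorm v := by
      rcases eq_or_lt_of_le (sqNorm_nonneg v) with h | h
      · exact absurd (sqNorm_eq_zero h.symm) hv0
      · exact h
    have h3 := sigMinSq_mul_le Z v
    have h5 := hcmp v
    rw [h1] at h5
    have h6 : 0 < (1 - δ) * sqNorm (Z.mulVec v) := by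
      apply mul_pos (by linarith)
      calc (0:ℝ) < sigMinSq Z * sqNorm v := mul_pos hK h2
        _ ≤ sqNorm (Z.mulVec v) := h3
    linarith
  have hδ1 : (0:ℝ) < 1 - δ := by linarith
  have hcmpQ : ∀ y, (1 - δ) * (y ⬝ᵥ Q1.mulVec y) ≤ y ⬝ᵥ Q2.mulVec y := by
    intro y
    rw [hq1, hq2]
    exact hcmp y
  have hinv := fun x => inv_quad_le Q1 Q2 h1sym h2sym h1u h2u psd1 hδ1 hcmpQ x
  have htr : Q2⁻¹.trace ≤ (1 - δ)⁻¹ * Q1⁻¹.trace := by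
    have hdiag : ∀ i, Q2⁻¹ i i ≤ (1 - δ)⁻¹ * Q1⁻¹ i i := by
      intro i
      have h1 := hinv (Pi.single i 1)
      rw [← diag_as_quad Q2⁻¹ i, ← diag_as_quad Q1⁻¹ i] at h1
      exact h1
    calc Q2⁻¹.trace = ∑ i, Q2⁻¹ i i := rfl
      _ ≤ ∑ i, (1 - δ)⁻¹ * Q1⁻¹ i i := Finset.sum_le_sum (fun i _ => hdiag i)
      _ = (1 - δ)⁻¹ * ∑ i, Q1⁻¹ i i := by rw [Finset.mul_sum]
      _ = (1 - δ)⁻¹ * Q1⁻¹.trace := rfl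
  have htr1 : 0 ≤ Q1⁻¹.trace := by
    have hd : ∀ i : Fin d, 0 ≤ Q1⁻¹ i i := by
      intro i
      rw [diag_as_quad Q1⁻¹ i]
      exact inv_quad_nonneg Q1 h1sym h1u psd1 _
    exact Finset.sum_nonneg fun i _ => hd i
  -- Step O : final assembly
  have hfrac : (1 - δ)⁻¹ ≤ (1 + c) ^ 2 := by
    have h1 : (1 - δ)⁻¹ ≤ 1 + 2 / 5 * ε := by
      rw [hδdef]
      exact arith_frac hε hε'
    have hκρ : 1 ≤ κ / ρ := by
      rw [le_div_iff₀ hρ₀, one_mul]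
      linarith [hκ1, hρ₁]
    have h2 : 2 / 5 * ε ≤ c := by
      rw [hcdef]
      have := mul_le_mul_of_nonneg_right hκρ (le_of_lt hε)
      calc 2 / 5 * ε = 2 / 5 * (1 * ε) := by ring
        _ ≤ 2 / 5 * (κ / ρ * ε) := by linarith
        _ = 2 / 5 * (κ / ρ) * ε := by ring
    have h3 : 1 + 2 / 5 * ε ≤ (1 + c) ^ 2 :=
      arith_one_add_sq h2 hc0 (by linarith)
    linarith
  have hsum : sqNorm μ' + Q2⁻¹.trace ≤ (1 + c) ^ 2 * (sqNorm μ + Q1⁻¹.trace) := by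
    have t2 : Q2⁻¹.trace ≤ (1 + c) ^ 2 * Q1⁻¹.trace := by
      calc Q2⁻¹.trace ≤ (1 - δ)⁻¹ * Q1⁻¹.trace := htr
        _ ≤ (1 + c) ^ 2 * Q1⁻¹.trace := mul_le_mul_of_nonneg_right hfrac htr1
    linarith [hM, t2]
  have hc_le : c ≤ κ / ρ * ε := by
    rw [hcdef]
    have hκρ0 : 0 ≤ κ / ρ * ε := mul_nonneg (le_of_lt (div_pos hκpos hρ₀)) (le_of_lt hε)
    linarith
  calc Real.sqrt (sqNorm μ' + Q2⁻¹.trace)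
      ≤ Real.sqrt ((1 + c) ^ 2 * (sqNorm μ + Q1⁻¹.trace)) := Real.sqrt_le_sqrt hsum
    _ = (1 + c) * Real.sqrt (sqNorm μ + Q1⁻¹.trace) := by
        rw [Real.sqrt_mul (by positivity : (0:ℝ) ≤ (1 + c) ^ 2),
          Real.sqrt_sq (by linarith : (0:ℝ) ≤ 1 + c)]
    _ ≤ (1 + condNum Z / ρ * ε) * Real.sqrt (sqNorm μ + Q1⁻¹.trace) := by
        apply mul_le_mul_of_nonneg_right _ (Real.sqrt_nonneg _)
        have : c ≤ condNum Z / ρ * ε := hc_le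
        linarith
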